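/- For gross substitute valuations, the set of Walrasian price vectors forms a lattice: if p and p' are Walrasian prices then so are the componentwise maximum p ∨ p' and the componentwise minimum p ∧ p' (Gul–Stacchetti). -/

import Mathlib

open Finset

section GSaux
variable {n : ℕ}

noncomputable def util (w : Finset (Fin n) → ℝ) (x : Fin n → ℝ) : ℝ :=
  (univ : Finset (Finset (Fin n))).sup' ⟨∅, mem_univ _⟩ fun T => w T - ∑ j ∈ T, x j

lemma le_util (w : Finset (Fin n) → ℝ) (x : Fin n → ℝ) (T : Finset (Fin n)) :
    w T - ∑ j ∈ T, x j ≤ util w x := le_sup' (fun T => w T - ∑ j ∈ T, x j) (mem_univ T)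

noncomputable def utilA (w : Finset (Fin n) → ℝ) (i : Fin n) (x : Fin n → ℝ) : ℝ :=
  ((univ : Finset (Finset (Fin n))).filter fun T => i ∈ T).sup'
    ⟨{i}, by simp⟩ fun T => w T - ∑ j ∈ T, x j

noncomputable def utilB (w : Finset (Fin n) → ℝ) (i : Fin n) (x : Fin n → ℝ) : ℝ :=
  ((univ : Finset (Finset (Fin n))).filter fun T => i ∉ T).sup'
    ⟨∅, by simp⟩ fun T => w T - ∑ j ∈ T, x j

def bump (x : Fin n → ℝ) (i : Fin n) (t : ℝ) : Fin n → ℝ :=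
  fun j => x j + if j = i then t else 0

lemma sum_bump (x : Fin n → ℝ) (i : Fin n) (t : ℝ) (T : Finset (Fin n)) :
    ∑ j ∈ T, bump x i t j = (∑ j ∈ T, x j) + (if i ∈ T then t else 0) := by
  simp [bump, Finset.sum_add_distrib, Finset.sum_ite_eq' T i fun _ => t]

lemma util_bump (w : Finset (Fin n) → ℝ) (i : Fin n) (x : Fin n → ℝ) (t : ℝ) :
    util w (bump x i t) = max (utilA w i x - t) (utilB w i x) := by
  apply le_antisymm
  · apply Finset.sup'_le
    intro T _
    rw [sum_bump]
    by_cases h : i ∈ T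
    · refine le_max_of_le_left ?_
      have hA : w T - ∑ j ∈ T, x j ≤ utilA w i x :=
        le_sup' (fun T => w T - ∑ j ∈ T, x j) (by simp [h])
      simp only [h, if_true]
      linarith
    · refine le_max_of_le_right ?_
      have hB : w T - ∑ j ∈ T, x j ≤ utilB w i x :=
        le_sup' (fun T => w T - ∑ j ∈ T, x j) (by simp [h])
      simp only [h, if_false]
      linarith
  · apply max_le
    · rw [sub_le_iff_le_add]
      apply Finset.sup'_le
      intro T hT
      have hi : i ∈ T := (mem_filter.mp hT).2
      have h := le_util w (bump x i t) T
      rw [sum_bump] at h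
      simp only [hi, if_true] at h
      linarith
    · apply Finset.sup'_le
      intro T hT
      have hi : i ∉ T := (mem_filter.mp hT).2
      have h := le_util w (bump x i t) T
      rw [sum_bump] at h
      simp only [hi, if_false] at h
      linarith

lemma util_eq_max (w : Finset (Fin n) → ℝ) (i : Fin n) (x : Fin n → ℝ) :
    util w x = max (utilA w i x) (utilB w i x) := by
  have h := util_bump w i x 0
  have hb : bump x i 0 = x := by funext j; simp [bump]
  rw [hb, sub_zero] at h
  exact h

lemma gsAB (w : Finset (Fin n) → ℝ)
    (hgs : ∀ (x x' : Fin n → ℝ), (∀ j, x j ≤ x' j) →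
      ∀ S : Finset (Fin n),
        (∀ T, w T - ∑ j ∈ T, x j ≤ w S - ∑ j ∈ S, x j) →
        ∃ S', (∀ T, w T - ∑ j ∈ T, x' j ≤ w S' - ∑ j ∈ S', x' j) ∧
          ∀ j ∈ S, x j = x' j → j ∈ S')
    (i : Fin n) (c c' : Fin n → ℝ) (hle : ∀ j, c j ≤ c' j) (hi : c i = c' i) :
    utilA w i c - utilB w i c ≤ utilA w i c' - utilB w i c' := by
  obtain ⟨Ts, hTs, hTseq⟩ :=
    Finset.exists_mem_eq_sup' (s := (univ : Finset (Finset (Fin n))).filter fun T => i ∈ T)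
      ⟨{i}, by simp⟩ (fun T => w T - ∑ j ∈ T, c j)
  have hiTs : i ∈ Ts := (mem_filter.mp hTs).2
  set t0 : ℝ := utilA w i c - utilB w i c with ht0
  have hTseq' : w Ts - ∑ j ∈ Ts, c j = utilA w i c := hTseq.symm
  have hdem : ∀ T, w T - ∑ j ∈ T, bump c i t0 j ≤ w Ts - ∑ j ∈ Ts, bump c i t0 j := by
    intro T
    rw [sum_bump, sum_bump]
    simp only [hiTs, if_true]
    by_cases h : i ∈ T
    · have hA : w T - ∑ j ∈ T, c j ≤ utilA w i c :=
        le_sup' (fun T => w T - ∑ j ∈ T, c j) (by simp [h])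
      simp only [h, if_true]
      linarith
    · have hB : w T - ∑ j ∈ T, c j ≤ utilB w i c :=
        le_sup' (fun T => w T - ∑ j ∈ T, c j) (by simp [h])
      simp only [h, if_false]
      linarith
  obtain ⟨S', hS'dem, hS'keep⟩ := hgs (bump c i t0) (bump c' i t0)
    (fun j => add_le_add (hle j) le_rfl) Ts hdem
  have hiS' : i ∈ S' := hS'keep i hiTs (by simp [bump, hi])
  obtain ⟨Tb, hTb, hTbeq⟩ :=
    Finset.exists_mem_eq_sup' (s := (univ : Finset (Finset (Fin n))).filter fun T => i ∉ T)
      ⟨∅, by simp⟩ (fun T => w T - ∑ j ∈ T, c' j)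
  have hiTb : i ∉ Tb := (mem_filter.mp hTb).2
  have h1 := hS'dem Tb
  rw [sum_bump, sum_bump] at h1
  simp only [hiTb, hiS', if_true, if_false] at h1
  have h2 : w S' - ∑ j ∈ S', c' j ≤ utilA w i c' :=
    le_sup' (fun T => w T - ∑ j ∈ T, c' j) (by simp [hiS'])
  have h3 : utilB w i c' = w Tb - ∑ j ∈ Tb, c' j := hTbeq
  linarith

lemma key_lemma (w : Finset (Fin n) → ℝ)
    (hgs : ∀ (x x' : Fin n → ℝ), (∀ j, x j ≤ x' j) →
      ∀ S : Finset (Fin n),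
        (∀ T, w T - ∑ j ∈ T, x j ≤ w S - ∑ j ∈ S, x j) →
        ∃ S', (∀ T, w T - ∑ j ∈ T, x' j ≤ w S' - ∑ j ∈ S', x' j) ∧
          ∀ j ∈ S, x j = x' j → j ∈ S')
    (i : Fin n) (c c' : Fin n → ℝ) (hle : ∀ j, c j ≤ c' j) (hi : c i = c' i)
    (δ : ℝ) (hδ : 0 ≤ δ) :
    util w (bump c' i δ) + util w c ≤ util w (bump c i δ) + util w c' := by
  have hab := gsAB w hgs i c c' hle hi
  rw [util_bump, util_bump, util_eq_max w i c, util_eq_max w i c']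
  simp only [max_def]
  split_ifs <;> linarith

lemma util_submod (w : Finset (Fin n) → ℝ)
    (hgs : ∀ (x x' : Fin n → ℝ), (∀ j, x j ≤ x' j) →
      ∀ S : Finset (Fin n),
        (∀ T, w T - ∑ j ∈ T, x j ≤ w S - ∑ j ∈ S, x j) →
        ∃ S', (∀ T, w T - ∑ j ∈ T, x' j ≤ w S' - ∑ j ∈ S', x' j) ∧
          ∀ j ∈ S, x j = x' j → j ∈ S')
    (p p' : Fin n → ℝ) :
    util w (fun j => max (p j) (p' j)) + util w (fun j => min (p j) (p' j))
      ≤ util w p + util w p' := by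
  set d : Fin n → ℝ := fun j => max (p' j - p j) 0 with hd
  set r : Fin n → ℝ := fun j => min (p j) (p' j) with hr
  have hdnn : ∀ j, 0 ≤ d j := fun j => le_max_right _ _
  have hrp : ∀ j, r j ≤ p j := fun j => min_le_left _ _
  have hpd : ∀ j, p j + d j = max (p j) (p' j) := by
    intro j
    rcases le_total (p j) (p' j) with h | h
    · rw [hd]; simp only []
      rw [max_eq_left (by linarith : (0:ℝ) ≤ p' j - p j), max_eq_right h]
      ring
    · rw [hd]; simp only []
      rw [max_eq_right (by linarith : p' j - p j ≤ (0:ℝ)), max_eq_left h]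
      ring
  have hrd : ∀ j, r j + d j = p' j := by
    intro j
    rcases le_total (p j) (p' j) with h | h
    · rw [hd, hr]; simp only []
      rw [max_eq_left (by linarith : (0:ℝ) ≤ p' j - p j), min_eq_left h]
      ring
    · rw [hd, hr]; simp only []
      rw [max_eq_right (by linarith : p' j - p j ≤ (0:ℝ)), min_eq_right h]
      ring
  have main : ∀ K : Finset (Fin n),
      util w (fun j => p j + if j ∈ K then d j else 0) + util w r
        ≤ util w (fun j => r j + if j ∈ K then d j else 0) + util w p := by
    intro K
    induction K using Finset.induction_on with
    | empty =>
      simp only [Finset.notMem_empty, if_false, add_zero]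
      show util w p + util w r ≤ util w r + util w p
      linarith
    | @insert i K hiK IH =>
      by_cases hdi : d i = 0
      · have e1 : (fun j => p j + if j ∈ insert i K then d j else 0)
            = fun j => p j + if j ∈ K then d j else 0 := by
          funext j
          by_cases hj : j = i
          · subst hj; simp [hiK, hdi]
          · simp [Finset.mem_insert, hj]
        have e2 : (fun j => r j + if j ∈ insert i K then d j else 0)
            = fun j => r j + if j ∈ K then d j else 0 := by
          funext j
          by_cases hj : j = i
          · subst hj; simp [hiK, hdi]
          · simp [Finset.mem_insert, hj]
        rw [e1, e2]; exact IH
      · have hri : r i = p i := by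
          rcases le_total (p i) (p' i) with h | h
          · rw [hr]; exact min_eq_left h
          · exfalso; apply hdi
            rw [hd]; simp only []
            exact max_eq_right (by linarith)
        have hk := key_lemma w hgs i
          (fun j => r j + if j ∈ K then d j else 0)
          (fun j => p j + if j ∈ K then d j else 0)
          (fun j => add_le_add (hrp j) le_rfl)
          (by show r i + _ = p i + _; rw [hri]) (d i) (hdnn i)
        have e1 : bump (fun j => p j + if j ∈ K then d j else 0) i (d i)
            = fun j => p j + if j ∈ insert i K then d j else 0 := by
          funext j
          by_cases hj : j = i
          · subst hj; simp [bump, hiK]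
          · simp [bump, hj, Finset.mem_insert]
        have e2 : bump (fun j => r j + if j ∈ K then d j else 0) i (d i)
            = fun j => r j + if j ∈ insert i K then d j else 0 := by
          funext j
          by_cases hj : j = i
          · subst hj; simp [bump, hiK]
          · simp [bump, hj, Finset.mem_insert]
        rw [e1, e2] at hk
        linarith
  have h := main univ
  have e1 : (fun j => p j + if j ∈ (univ : Finset (Fin n)) then d j else 0)
      = fun j => max (p j) (p' j) := by
    funext j; simp [hpd j]
  have e2 : (fun j => r j + if j ∈ (univ : Finset (Fin n)) then d j else 0) = p' := by
    funext j; simp [hrd j]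
  rw [e1, e2] at h
  linarith

end GSaux

/-- **Gul–Stacchetti lattice theorem.** If all buyers have gross substitute valuations
(Kelso–Crawford definition), then the set of Walrasian price vectors forms a lattice:
if `p` and `p'` are Walrasian, so are the componentwise max and componentwise min. -/
theorem walrasian_prices_lattice
    (m n : ℕ) (v : Fin m → Finset (Fin n) → ℤ)
    (hGS : ∀ (i : Fin m) (p p' : Fin n → ℝ), (∀ j, p j ≤ p' j) →
      ∀ S : Finset (Fin n),
        (∀ T, (v i T : ℝ) - ∑ j ∈ T, p j ≤ (v i S : ℝ) - ∑ j ∈ S, p j) →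
        ∃ S', (∀ T, (v i T : ℝ) - ∑ j ∈ T, p' j ≤ (v i S' : ℝ) - ∑ j ∈ S', p' j) ∧
          ∀ j ∈ S, p j = p' j → j ∈ S') :
    let Walrasian : (Fin n → ℝ) → Prop := fun p =>
      ∃ S : Fin m → Finset (Fin n),
        (∀ i1 i2, i1 ≠ i2 → Disjoint (S i1) (S i2)) ∧ (∀ j, ∃ i, j ∈ S i) ∧
        ∀ i T, (v i T : ℝ) - ∑ j ∈ T, p j ≤ (v i (S i) : ℝ) - ∑ j ∈ S i, p j
    ∀ p p' : Fin n → ℝ, Walrasian p → Walrasian p' →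
      Walrasian (fun j => max (p j) (p' j)) ∧ Walrasian (fun j => min (p j) (p' j)) := by
  intro Walrasian p p' hp hp'
  obtain ⟨S, hSdisj, hScov, hSdem⟩ := hp
  obtain ⟨S', hS'disj, hS'cov, hS'dem⟩ := hp'
  set q : Fin n → ℝ := fun j => max (p j) (p' j) with hq
  set r : Fin n → ℝ := fun j => min (p j) (p' j) with hr
  -- partition sums
  have hpart : ∀ (A : Fin m → Finset (Fin n)),
      (∀ i1 i2, i1 ≠ i2 → Disjoint (A i1) (A i2)) → (∀ j, ∃ i, j ∈ A i) →
      ∀ x : Fin n → ℝ, ∑ i, ∑ j ∈ A i, x j = ∑ j, x j := by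
    intro A hdisj hcov x
    have hbU : (univ : Finset (Fin m)).biUnion A = univ := by
      apply Finset.eq_univ_of_forall
      intro j
      obtain ⟨i, hi⟩ := hcov j
      exact Finset.mem_biUnion.mpr ⟨i, mem_univ _, hi⟩
    calc ∑ i, ∑ j ∈ A i, x j
        = ∑ j ∈ (univ : Finset (Fin m)).biUnion A, x j :=
          (Finset.sum_biUnion (fun i1 _ i2 _ hne => hdisj i1 i2 hne)).symm
      _ = ∑ j, x j := by rw [hbU]
  -- per-buyer indirect utility facts
  have hUp : ∀ i : Fin m,
      util (fun T => ((v i T : ℝ))) p = (v i (S i) : ℝ) - ∑ j ∈ S i, p j :=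
    fun i => le_antisymm (Finset.sup'_le _ _ fun T _ => hSdem i T)
      (le_util (fun T => ((v i T : ℝ))) p (S i))
  have hUp' : ∀ i : Fin m,
      util (fun T => ((v i T : ℝ))) p' = (v i (S' i) : ℝ) - ∑ j ∈ S' i, p' j :=
    fun i => le_antisymm (Finset.sup'_le _ _ fun T _ => hS'dem i T)
      (le_util (fun T => ((v i T : ℝ))) p' (S' i))
  have hsub : ∀ i : Fin m,
      util (fun T => ((v i T : ℝ))) q + util (fun T => ((v i T : ℝ))) r
        ≤ util (fun T => ((v i T : ℝ))) p + util (fun T => ((v i T : ℝ))) p' :=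
    fun i => util_submod _ (hGS i) p p'
  -- sums
  have hQR : ∑ j, q j + ∑ j, r j = ∑ j, p j + ∑ j, p' j := by
    rw [← Finset.sum_add_distrib, ← Finset.sum_add_distrib]
    exact Finset.sum_congr rfl fun j _ => max_add_min _ _
  have hsum : ∑ i, (util (fun T => ((v i T : ℝ))) q + util (fun T => ((v i T : ℝ))) r)
      ≤ ∑ i, (util (fun T => ((v i T : ℝ))) p + util (fun T => ((v i T : ℝ))) p') :=
    Finset.sum_le_sum fun i _ => hsub i
  -- the two slack sums
  have hDq : ∀ i : Fin m,
      0 ≤ util (fun T => ((v i T : ℝ))) q - ((v i (S i) : ℝ) - ∑ j ∈ S i, q j) :=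
    fun i => by have := le_util (fun T => ((v i T : ℝ))) q (S i); linarith
  have hDr : ∀ i : Fin m,
      0 ≤ util (fun T => ((v i T : ℝ))) r - ((v i (S' i) : ℝ) - ∑ j ∈ S' i, r j) :=
    fun i => by have := le_util (fun T => ((v i T : ℝ))) r (S' i); linarith
  have htotal :
      (∑ i, (util (fun T => ((v i T : ℝ))) q - ((v i (S i) : ℝ) - ∑ j ∈ S i, q j)))
      + (∑ i, (util (fun T => ((v i T : ℝ))) r - ((v i (S' i) : ℝ) - ∑ j ∈ S' i, r j)))
      ≤ 0 := by
    have e1 : ∑ i, (util (fun T => ((v i T : ℝ))) q - ((v i (S i) : ℝ) - ∑ j ∈ S i, q j))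
        = ∑ i, util (fun T => ((v i T : ℝ))) q
          - (∑ i, (v i (S i) : ℝ) - ∑ j, q j) := by
      rw [Finset.sum_sub_distrib, Finset.sum_sub_distrib, hpart S hSdisj hScov q]
    have e2 : ∑ i, (util (fun T => ((v i T : ℝ))) r - ((v i (S' i) : ℝ) - ∑ j ∈ S' i, r j))
        = ∑ i, util (fun T => ((v i T : ℝ))) r
          - (∑ i, (v i (S' i) : ℝ) - ∑ j, r j) := by
      rw [Finset.sum_sub_distrib, Finset.sum_sub_distrib, hpart S' hS'disj hS'cov r]
    have e3 : ∑ i, util (fun T => ((v i T : ℝ))) p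
        = ∑ i, (v i (S i) : ℝ) - ∑ j, p j := by
      rw [Finset.sum_congr rfl fun i _ => hUp i, Finset.sum_sub_distrib,
        hpart S hSdisj hScov p]
    have e4 : ∑ i, util (fun T => ((v i T : ℝ))) p'
        = ∑ i, (v i (S' i) : ℝ) - ∑ j, p' j := by
      rw [Finset.sum_congr rfl fun i _ => hUp' i, Finset.sum_sub_distrib,
        hpart S' hS'disj hS'cov p']
    rw [Finset.sum_add_distrib, Finset.sum_add_distrib, e3, e4] at hsum
    rw [e1, e2]
    linarith
  have hqsum0 : ∀ i : Fin m,
      util (fun T => ((v i T : ℝ))) q - ((v i (S i) : ℝ) - ∑ j ∈ S i, q j) = 0 := by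
    have h1 : 0 ≤ ∑ i, (util (fun T => ((v i T : ℝ))) q - ((v i (S i) : ℝ) - ∑ j ∈ S i, q j)) :=
      Finset.sum_nonneg fun i _ => hDq i
    have h2 : 0 ≤ ∑ i, (util (fun T => ((v i T : ℝ))) r - ((v i (S' i) : ℝ) - ∑ j ∈ S' i, r j)) :=
      Finset.sum_nonneg fun i _ => hDr i
    have hz : ∑ i, (util (fun T => ((v i T : ℝ))) q - ((v i (S i) : ℝ) - ∑ j ∈ S i, q j)) = 0 :=
      le_antisymm (by linarith) h1
    intro i
    exact (Finset.sum_eq_zero_iff_of_nonneg fun i _ => hDq i).mp hz i (mem_univ i)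
  have hrsum0 : ∀ i : Fin m,
      util (fun T => ((v i T : ℝ))) r - ((v i (S' i) : ℝ) - ∑ j ∈ S' i, r j) = 0 := by
    have h1 : 0 ≤ ∑ i, (util (fun T => ((v i T : ℝ))) q - ((v i (S i) : ℝ) - ∑ j ∈ S i, q j)) :=
      Finset.sum_nonneg fun i _ => hDq i
    have h2 : 0 ≤ ∑ i, (util (fun T => ((v i T : ℝ))) r - ((v i (S' i) : ℝ) - ∑ j ∈ S' i, r j)) :=
      Finset.sum_nonneg fun i _ => hDr i
    have hz : ∑ i, (util (fun T => ((v i T : ℝ))) r - ((v i (S' i) : ℝ) - ∑ j ∈ S' i, r j)) = 0 :=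
      le_antisymm (by linarith) h2
    intro i
    exact (Finset.sum_eq_zero_iff_of_nonneg fun i _ => hDr i).mp hz i (mem_univ i)
  constructor
  · refine ⟨S, hSdisj, hScov, fun i T => ?_⟩
    have h0 := hqsum0 i
    have h1 := le_util (fun T => ((v i T : ℝ))) q T
    linarith
  · refine ⟨S', hS'disj, hS'cov, fun i T => ?_⟩
    have h0 := hrsum0 i
    have h1 := le_util (fun T => ((v i T : ℝ))) r T
    linarith
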